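/- arXiv:2511.07570 — 5 statements merged into one kernel-verified Lean document; each statement's English description precedes it below -/
import Mathlib

section
/- Let r ≥ 3 and let M be a matroid on ground set {t, x_1, y_1, ..., x_r, y_r} such that for each i ∈ {1,...,r}, the set {t, x_i, y_i} is a circuit of size 3 (a triangle), and for each i, the set {x_i, y_i, t*} is a cocircuit of size 3 (a triad) for some fixed element t* distinct from t. Then for all distinct i, j ∈ {1,...,r}, the set {x_i, y_i, x_j, y_j} is a circuit of M. -/
open Matroid Set

namespace SpikePaper

variable {α : Type*}

/-- `C` is a circuit of the matroid `M`: a minimal dependent set. -/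
def Circ (M : Matroid α) (C : Set α) : Prop :=
  M.Dep C ∧ ∀ ⦃D⦄, M.Dep D → D ⊆ C → D = C

/-- A cocircuit of `M` is a circuit of the dual matroid. -/
def Cocirc (M : Matroid α) (C : Set α) : Prop := Circ M✶ C

/-- A triangle is a 3-element circuit. -/
def Triangle (M : Matroid α) (T : Set α) : Prop := Circ M T ∧ T.encard = 3

/-- A triad is a 3-element cocircuit. -/
def Triad (M : Matroid α) (T : Set α) : Prop := Cocirc M T ∧ T.encard = 3

/-- The rank of the set `X` in `M` equals `n`. -/
def RkEq (M : Matroid α) (X : Set α) (n : ℕ) : Prop :=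
  ∃ I, M.IsBasis I X ∧ I.ncard = n

/-- The rank of `M` equals `n`. -/
def RankEq (M : Matroid α) (n : ℕ) : Prop := RkEq M M.E n

/-- Deletion of the set `D` from `M`. -/
def del (M : Matroid α) (D : Set α) : Matroid α := M ↾ (M.E \ D)

/-- Contraction of the set `C` in `M`. -/
def con (M : Matroid α) (C : Set α) : Matroid α := (del M✶ C)✶

/-- The rank of `X` in `M`, as an extended natural number. -/
noncomputable def er (M : Matroid α) (X : Set α) : ℕ∞ :=
  ⨆ I ∈ {I | M.Indep I ∧ I ⊆ X}, I.encard

/-- `M` is 3-connected: it has no `k`-separation for `k ∈ {1, 2}`. -/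
def ThreeConnected (M : Matroid α) : Prop :=
  ∀ k : ℕ, 1 ≤ k → k ≤ 2 → ∀ X Y : Set α, X ∪ Y = M.E → Disjoint X Y →
    er M X + er M Y + 1 ≤ er M M.E + (k : ℕ∞) →
    X.encard < (k : ℕ∞) ∨ Y.encard < (k : ℕ∞)

/-- `M` is simple: every subset of the ground set with at most two elements is independent. -/
def Simple (M : Matroid α) : Prop := ∀ X ⊆ M.E, X.encard ≤ 2 → M.Indep X

/-- The labels `t, x 0, y 0, ..., x (r-1), y (r-1)` are pairwise distinct. -/
def SpikeLabels {r : ℕ} (t : α) (x y : Fin r → α) : Prop :=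
  Function.Injective x ∧ Function.Injective y ∧
  (∀ i j, x i ≠ y j) ∧ (∀ i, t ≠ x i) ∧ (∀ i, t ≠ y i)

/-- `M` is a rank-`r` tipped spike with tip `t` and legs `{x i, y i}`. -/
def IsTippedSpike (M : Matroid α) (r : ℕ) (t : α) (x y : Fin r → α) : Prop :=
  3 ≤ r ∧ SpikeLabels t x y ∧
  M.E = insert t (⋃ i, {x i, y i}) ∧
  RankEq M r ∧
  (∀ i, Circ M {t, x i, y i}) ∧
  ∀ J : Set (Fin r), J.Nonempty → J ≠ Set.univ →
    RkEq M (⋃ i ∈ J, {x i, y i}) (J.ncard + 1)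

/-- `X` is a `U_{2,n}`-restriction (an `n`-point line) of `M`. -/
def LineRestriction (M : Matroid α) (X : Set α) (n : ℕ) : Prop :=
  X ⊆ M.E ∧ X.ncard = n ∧ RkEq M X 2 ∧
  ∀ p ⊆ X, p.encard = 2 → M.Indep p

/-- `X` is a `U_{3,5}`-restriction of `M`. -/
def U35Restriction (M : Matroid α) (X : Set α) : Prop :=
  X ⊆ M.E ∧ X.ncard = 5 ∧ RkEq M X 3 ∧
  ∀ S ⊆ X, S.encard ≤ 3 → M.Indep S

/-- `{u, v}` is contained in three distinct 4-element circuits of `M`. -/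
def ThreeFourCircs (M : Matroid α) (u v : α) : Prop :=
  ∃ C1 C2 C3 : Set α, Circ M C1 ∧ Circ M C2 ∧ Circ M C3 ∧
    C1.encard = 4 ∧ C2.encard = 4 ∧ C3.encard = 4 ∧
    C1 ≠ C2 ∧ C1 ≠ C3 ∧ C2 ≠ C3 ∧
    {u, v} ⊆ C1 ∧ {u, v} ⊆ C2 ∧ {u, v} ⊆ C3

lemma circ_ssubset_indep {M : Matroid α} {C D : Set α} (hC : Circ M C) (hDC : D ⊆ C)
    (hne : D ≠ C) : M.Indep D := by
  by_contra h
  exact hne (hC.2 (Matroid.dep_of_not_indep h (hDC.trans hC.1.subset_ground)) hDC)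

lemma exists_circ_subset_aux {M : Matroid α} :
    ∀ n : ℕ, ∀ D : Set α, D.Finite → D.ncard ≤ n → M.Dep D → ∃ C, C ⊆ D ∧ Circ M C := by
  intro n
  induction n with
  | zero =>
    intro D hfin hcard hD
    obtain ⟨a, ha⟩ := hD.nonempty
    have : D.ncard = 0 := Nat.le_zero.mp hcard
    rw [Set.ncard_eq_zero hfin] at this
    exact absurd ha (this ▸ Set.notMem_empty a)
  | succ n ih =>
    intro D hfin hcard hD
    by_cases h : ∀ ⦃D'⦄, M.Dep D' → D' ⊆ D → D' = D
    · exact ⟨D, subset_rfl, hD, h⟩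
    · push_neg at h
      obtain ⟨D', hD', hsub, hne⟩ := h
      have hss : D' ⊂ D := hsub.ssubset_of_ne hne
      have hlt : D'.ncard < D.ncard := Set.ncard_lt_ncard hss hfin
      obtain ⟨C, hCD', hC⟩ := ih D' (hfin.subset hsub) (by omega) hD'
      exact ⟨C, hCD'.trans hsub, hC⟩

lemma exists_circ_subset {M : Matroid α} {D : Set α} (hfin : D.Finite) (hD : M.Dep D) :
    ∃ C, C ⊆ D ∧ Circ M C :=
  exists_circ_subset_aux D.ncard D hfin le_rfl hD

lemma circ_elim {M : Matroid α} {C₁ C₂ : Set α} {e : α} (hC1 : Circ M C₁) (hC2 : Circ M C₂)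
    (hne : C₁ ≠ C₂) (hfin : (C₁ ∪ C₂).Finite) (he1 : e ∈ C₁) (he2 : e ∈ C₂) :
    M.Dep ((C₁ ∪ C₂) \ {e}) := by
  set U := C₁ ∪ C₂ with hU
  have hUE : U ⊆ M.E := union_subset hC1.1.subset_ground hC2.1.subset_ground
  by_contra hX
  have hXE : (U \ {e}) ⊆ M.E := diff_subset.trans hUE
  have hXi : M.Indep (U \ {e}) := Matroid.indep_of_not_dep hX hXE
  -- pick f ∈ C₂ \ C₁
  have hf : ∃ f, f ∈ C₂ ∧ f ∉ C₁ := by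
    by_contra h
    push_neg at h
    exact hne (hC1.2 hC2.1 h).symm
  obtain ⟨f, hfC2, hfC1⟩ := hf
  have hI0 : M.Indep (C₂ \ {f}) := by
    refine circ_ssubset_indep hC2 diff_subset ?_
    intro h
    rw [← h] at hfC2
    exact hfC2.2 rfl
  obtain ⟨I, hI, hI0I⟩ :=
    hI0.subset_isBasis_of_subset (diff_subset.trans subset_union_right) hUE
  -- U \ {e} is a basis of U
  obtain ⟨J, hJ, hXJ⟩ := hXi.subset_isBasis_of_subset diff_subset hUE
  have hJX : J = U \ {e} := by
    by_contra h
    have hUJ : U ⊆ J := by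
      intro a ha
      by_cases hae : a = e
      · rw [hae]
        obtain ⟨b, hbJ, hbX⟩ := exists_of_ssubset (hXJ.ssubset_of_ne (Ne.symm h))
        have hbe : b = e := by
          by_contra hbe
          exact hbX ⟨hJ.subset hbJ, hbe⟩
        rwa [← hbe]
      · exact hXJ ⟨ha, hae⟩
    exact (hC1.1.superset (subset_union_left.trans hUJ) hJ.indep.subset_ground).not_indep
      hJ.indep
  have hcard := hJ.encard_eq_encard hI
  -- f ∉ I
  have hfI : f ∉ I := by
    intro hfmem
    have hC2I : C₂ ⊆ I := by
      intro a ha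
      by_cases haf : a = f
      · rwa [haf]
      · exact hI0I ⟨ha, haf⟩
    exact hC2.1.not_indep (hI.indep.subset hC2I)
  -- pick g ∈ C₁ \ I
  have hg : ∃ g, g ∈ C₁ ∧ g ∉ I := by
    by_contra h
    push_neg at h
    exact hC1.1.not_indep (hI.indep.subset h)
  obtain ⟨g, hgC1, hgI⟩ := hg
  have hgf : g ≠ f := fun h => hfC1 (h ▸ hgC1)
  have hIsub : I ⊆ (U \ {f}) \ {g} := by
    intro a ha
    refine ⟨⟨hI.subset ha, ?_⟩, ?_⟩
    · intro h
      rw [mem_singleton_iff] at h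
      exact hfI (h ▸ ha)
    · intro h
      rw [mem_singleton_iff] at h
      exact hgI (h ▸ ha)
  -- cardinality contradiction
  have hfU : f ∈ U := Or.inr hfC2
  have hgU : g ∈ U \ {f} := ⟨Or.inl hgC1, by simpa using hgf⟩
  have heU : e ∈ U := Or.inl he1
  have hJn : J.ncard = U.ncard - 1 := by
    rw [hJX, Set.ncard_diff_singleton_of_mem heU]
  have hIn : I.ncard ≤ U.ncard - 2 := by
    have h1 := Set.ncard_le_ncard hIsub ((hfin.diff).diff)
    have h2 : ((U \ {f}) \ {g}).ncard = U.ncard - 1 - 1 := by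
      rw [Set.ncard_diff_singleton_of_mem hgU,
        Set.ncard_diff_singleton_of_mem hfU]
    omega
  have hJI : J.ncard = I.ncard := by
    rw [Set.ncard_def, Set.ncard_def, hcard]
  have hU2 : 2 ≤ U.ncard := by
    have hsub : ({f, g} : Set α) ⊆ U := by
      rintro a (rfl | rfl)
      · exact hfU
      · exact hgU.1
    have := Set.ncard_le_ncard hsub hfin
    rwa [Set.ncard_pair hgf.symm] at this
  omega

lemma circ_inter_cocirc_ne_singleton {M : Matroid α} {C K : Set α} (hC : Circ M C)
    (hK : Cocirc M K) (e : α) : C ∩ K ≠ {e} := by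
  intro he
  have hm : e ∈ C ∩ K := by rw [he]; exact rfl
  have hKE : K ⊆ M.E := by simpa using hK.1.subset_ground
  have hCe : M.Indep (C \ {e}) := by
    refine circ_ssubset_indep hC diff_subset ?_
    intro h
    rw [← h] at hm
    exact hm.1.2 rfl
  have hKe : M✶.Indep (K \ {e}) := by
    refine circ_ssubset_indep hK diff_subset ?_
    intro h
    rw [← h] at hm
    exact hm.2.2 rfl
  obtain ⟨-, B, hB, hdj⟩ := Matroid.dual_indep_iff_exists'.mp hKe
  obtain ⟨B', hB', hsub1, hsub2⟩ := hCe.exists_isBase_subset_union_isBase hB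
  have heB' : e ∉ B' := by
    intro h
    have hCB' : C ⊆ B' := by
      intro a ha
      by_cases hae : a = e
      · rwa [hae]
      · exact hsub1 ⟨ha, hae⟩
    exact hC.1.not_indep (hB'.indep.subset hCB')
  have hKB' : Disjoint K B' := by
    rw [Set.disjoint_left]
    intro a haK haB'
    rcases hsub2 haB' with h | h
    · have : a ∈ C ∩ K := ⟨h.1, haK⟩
      rw [he] at this
      exact h.2 this
    · by_cases hae : a = e
      · exact heB' (hae ▸ haB')
      · exact (Set.disjoint_left.mp hdj ⟨haK, hae⟩) h
  have hdb : M✶.IsBase (M.E \ B') := by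
    rw [Matroid.dual_isBase_iff diff_subset, Set.diff_diff_cancel_left hB'.subset_ground]
    exact hB'
  have : M✶.Indep K := hdb.indep.subset (subset_diff.mpr ⟨hKE, hKB'⟩)
  exact hK.1.not_indep this

/-- if `M` has ground set `{t, t*, x_1, y_1, ..., x_r, y_r}` (all distinct),
each `{t, x i, y i}` is a triangle and each `{x i, y i, t*}` is a triad, then for all
distinct `i, j` the set `{x i, y i, x j, y j}` is a circuit of `M`. -/
theorem stmt0 {α : Type*} (M : Matroid α) (r : ℕ) (hr : 3 ≤ r)
    (t tstar : α) (x y : Fin r → α)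
    (hlab : SpikeLabels t x y) (hlab' : SpikeLabels tstar x y) (htt : t ≠ tstar)
    (hE : M.E = insert t (insert tstar (⋃ i, {x i, y i})))
    (htri : ∀ i, Triangle M {t, x i, y i})
    (htriad : ∀ i, Triad M {x i, y i, tstar}) :
    ∀ i j : Fin r, i ≠ j → Circ M {x i, y i, x j, y j} := by
  obtain ⟨hxinj, hyinj, hxy, htx, hty⟩ := hlab
  obtain ⟨-, -, -, hsx, hsy⟩ := hlab'
  intro i j hij
  set A : Set α := {x i, y i, x j, y j} with hA
  have hAfin : A.Finite :=
    ((((Set.finite_singleton (y j)).insert (x j)).insert (y i)).insert (x i))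
  have hTi := (htri i).1
  have hTj := (htri j).1
  have hTne : ({t, x i, y i} : Set α) ≠ {t, x j, y j} := by
    intro h
    have hmem : x i ∈ ({t, x j, y j} : Set α) := h ▸ (by simp)
    rcases hmem with h' | h' | h'
    · exact htx i h'.symm
    · exact hij (hxinj h')
    · exact hxy i j h'
  have hUfin : ({t, x i, y i} ∪ {t, x j, y j} : Set α).Finite := by
    apply Set.Finite.union <;>
      exact ((Set.finite_singleton _).insert _).insert _
  have hA_eq : ({t, x i, y i} ∪ {t, x j, y j} : Set α) \ {t} = A := by
    ext a
    simp only [hA, mem_diff, mem_union, mem_insert_iff, mem_singleton_iff]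
    constructor
    · rintro ⟨h, hne⟩
      tauto
    · rintro (rfl | rfl | rfl | rfl)
      · exact ⟨Or.inl (Or.inr (Or.inl rfl)), fun h => htx i h.symm⟩
      · exact ⟨Or.inl (Or.inr (Or.inr rfl)), fun h => hty i h.symm⟩
      · exact ⟨Or.inr (Or.inr (Or.inl rfl)), fun h => htx j h.symm⟩
      · exact ⟨Or.inr (Or.inr (Or.inr rfl)), fun h => hty j h.symm⟩
  have hAdep : M.Dep A := by
    rw [← hA_eq]
    exact circ_elim hTi hTj hTne hUfin (Or.inl rfl) (Or.inl rfl)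
  -- key: every circuit contained in A equals A
  have key : ∀ C, Circ M C → C ⊆ A → C = A := by
    intro C hC hCA
    have hmemA : ∀ a ∈ A, a = x i ∨ a = y i ∨ a = x j ∨ a = y j := by
      intro a ha
      simpa [hA] using ha
    have hts : tstar ∉ C := by
      intro h
      rcases hmemA _ (hCA h) with h' | h' | h' | h'
      · exact hsx i h'
      · exact hsy i h'
      · exact hsx j h'
      · exact hsy j h'
    have htC : t ∉ C := by
      intro h
      rcases hmemA _ (hCA h) with h' | h' | h' | h'
      · exact htx i h'
      · exact hty i h'
      · exact htx j h'
      · exact hty j h'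
    -- in each leg, both or neither element of the leg is in C
    have both : ∀ k : Fin r, (x k ∈ C → y k ∈ C) ∧ (y k ∈ C → x k ∈ C) := by
      intro k
      constructor
      · intro hx
        by_contra hy
        apply circ_inter_cocirc_ne_singleton hC (htriad k).1 (x k)
        ext a
        simp only [mem_inter_iff, mem_insert_iff, mem_singleton_iff]
        constructor
        · rintro ⟨haC, rfl | rfl | rfl⟩
          · rfl
          · exact absurd haC hy
          · exact absurd haC hts
        · rintro rfl
          exact ⟨hx, Or.inl rfl⟩
      · intro hy
        by_contra hx
        apply circ_inter_cocirc_ne_singleton hC (htriad k).1 (y k)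
        ext a
        simp only [mem_inter_iff, mem_insert_iff, mem_singleton_iff]
        constructor
        · rintro ⟨haC, rfl | rfl | rfl⟩
          · exact absurd haC hx
          · rfl
          · exact absurd haC hts
        · rintro rfl
          exact ⟨hy, Or.inr (Or.inl rfl)⟩
    -- C is not contained in a single leg
    have not_sub : ∀ k : Fin r, ¬(C ⊆ {x k, y k}) := by
      intro k hsub
      have hCT : C ⊆ ({t, x k, y k} : Set α) := fun a ha => Or.inr (hsub ha)
      have hCne : C ≠ ({t, x k, y k} : Set α) := by
        intro h
        have : t ∈ C := h ▸ (Or.inl rfl : t ∈ ({t, x k, y k} : Set α))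
        exact htC this
      exact hC.1.not_indep (circ_ssubset_indep (htri k).1 hCT hCne)
    have main_i : x i ∈ C ∧ y i ∈ C := by
      by_contra h
      have hxiC : x i ∉ C := fun hx => h ⟨hx, (both i).1 hx⟩
      have hyiC : y i ∉ C := fun hy => h ⟨(both i).2 hy, hy⟩
      apply not_sub j
      intro a haC
      rcases hmemA _ (hCA haC) with rfl | rfl | rfl | rfl
      · exact absurd haC hxiC
      · exact absurd haC hyiC
      · exact Or.inl rfl
      · exact Or.inr rfl
    have main_j : x j ∈ C ∧ y j ∈ C := by
      by_contra h
      have hxjC : x j ∉ C := fun hx => h ⟨hx, (both j).1 hx⟩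
      have hyjC : y j ∉ C := fun hy => h ⟨(both j).2 hy, hy⟩
      apply not_sub i
      intro a haC
      rcases hmemA _ (hCA haC) with rfl | rfl | rfl | rfl
      · exact Or.inl rfl
      · exact Or.inr rfl
      · exact absurd haC hxjC
      · exact absurd haC hyjC
    refine hCA.antisymm ?_
    intro a ha
    rcases hmemA a ha with rfl | rfl | rfl | rfl
    · exact main_i.1
    · exact main_i.2
    · exact main_j.1
    · exact main_j.2
  refine ⟨hAdep, ?_⟩
  intro D hD hDA
  obtain ⟨C, hCD, hC⟩ := exists_circ_subset (hAfin.subset hDA) hD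
  have hCA := key C hC (hCD.trans hDA)
  exact hDA.antisymm (hCA ▸ hCD)

end SpikePaper
end

section
/- Let M be a 3-connected matroid, let X ⊆ E(M) with the restriction M|X isomorphic to the uniform matroid U_{2,n} where n ≥ 4, and let x ∈ X. Then M \ x is 3-connected. -/
open Matroid Set

namespace SpikePaper

variable {α : Type*}

lemma er_eq_encard_basis' {M : Matroid α} {I X : Set α} (hI : M.IsBasis' I X) :
    er M X = I.encard := by
  refine le_antisymm (iSup₂_le fun J hJ => ?_)
    (le_iSup₂_of_le I ⟨hI.indep, hI.subset⟩ le_rfl)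
  obtain ⟨hJi, hJX⟩ := hJ
  by_contra h
  push_neg at h
  obtain ⟨e, ⟨heJ, heI⟩, hins⟩ := hI.indep.augment hJi h
  have hmax := hI.2 ⟨hins, insert_subset (hJX heJ) hI.subset⟩ (subset_insert _ _)
  exact heI (hmax (mem_insert _ _))

lemma er_congr_closure {M : Matroid α} {X Y : Set α} (hXY : X ⊆ Y)
    (hYcl : Y ⊆ M.closure X) : er M Y = er M X := by
  obtain ⟨I, hI⟩ := M.exists_isBasis' X
  have hclXY : M.closure Y = M.closure X :=
    subset_antisymm ((M.closure_subset_closure hYcl).trans (M.closure_closure X).subset)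
      (M.closure_subset_closure hXY)
  have hIY : M.IsBasis' I Y := by
    rw [isBasis'_iff_isBasis_closure]
    exact ⟨hclXY ▸ hI.isBasis_closure_right, hI.subset.trans hXY⟩
  rw [er_eq_encard_basis' hIY, er_eq_encard_basis' hI]

lemma er_restrict (M : Matroid α) (R A : Set α) : er (M ↾ R) A = er M (A ∩ R) := by
  have h : {I : Set α | (M ↾ R).Indep I ∧ I ⊆ A} = {I | M.Indep I ∧ I ⊆ A ∩ R} := by
    ext I
    simp only [mem_setOf_eq, restrict_indep_iff, subset_inter_iff]
    tauto
  simp only [er, h]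

lemma key_sep {M : Matroid α} (h3 : ThreeConnected M) {x p q : α} (hxE : x ∈ M.E)
    (hcl : x ∈ M.closure {p, q}) (k : ℕ) (hk1 : 1 ≤ k) (hk2 : k ≤ 2)
    {A B : Set α} (hAB : A ∪ B = M.E \ {x}) (hdisj : Disjoint A B)
    (hpqA : {p, q} ⊆ A)
    (hineq : er M A + er M B + 1 ≤ er M (M.E \ {x}) + (k : ℕ∞)) :
    A.encard < (k : ℕ∞) ∨ B.encard < (k : ℕ∞) := by
  have hA_sub : A ⊆ M.E \ {x} := hAB ▸ subset_union_left
  have hB_sub : B ⊆ M.E \ {x} := hAB ▸ subset_union_right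
  have hxA : x ∉ A := fun h => (hA_sub h).2 rfl
  have hxB : x ∉ B := fun h => (hB_sub h).2 rfl
  have hclA : x ∈ M.closure A := M.closure_subset_closure hpqA hcl
  -- er of insert x A equals er A
  have herA : er M (insert x A) = er M A :=
    er_congr_closure (subset_insert x A)
      (insert_subset hclA (M.subset_closure A (hA_sub.trans diff_subset)))
  -- er of ground equals er of ground minus x
  have herE : er M M.E = er M (M.E \ {x}) := by
    refine er_congr_closure diff_subset fun e he => ?_
    by_cases hex : e = x
    · subst hex
      exact M.closure_subset_closure (hpqA.trans hA_sub) hcl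
    · exact M.subset_closure (M.E \ {x}) diff_subset ⟨he, hex⟩
  have hunion : insert x A ∪ B = M.E := by
    rw [insert_union, hAB, insert_diff_singleton, insert_eq_self.2 hxE]
  have hdisj' : Disjoint (insert x A) B := by
    refine disjoint_left.2 fun y hy hyB => ?_
    rcases mem_insert_iff.1 hy with rfl | hyA
    · exact hxB hyB
    · exact (disjoint_left.1 hdisj hyA) hyB
  have hineq' : er M (insert x A) + er M B + 1 ≤ er M M.E + (k : ℕ∞) := by
    rw [herA, herE]
    exact hineq
  rcases h3 k hk1 hk2 (insert x A) B hunion hdisj' hineq' with h | h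
  · exact Or.inl (lt_of_le_of_lt (encard_mono (subset_insert x A)) h)
  · exact Or.inr h

/-- deleting a point of a line with at least 4 points from a 3-connected
matroid keeps it 3-connected. -/
theorem stmt7 {α : Type*} (M : Matroid α) (h3 : ThreeConnected M)
    (X : Set α) (n : ℕ) (hn : 4 ≤ n) (hline : LineRestriction M X n)
    (x : α) (hx : x ∈ X) :
    ThreeConnected (del M {x}) := by
  obtain ⟨hXE, hXcard, hXrk, hXpts⟩ := hline
  have hxE : x ∈ M.E := hXE hx
  -- the rank of X is 2
  have her2 : er M X = 2 := by
    obtain ⟨I, hI, hIcard⟩ := hXrk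
    rw [er_eq_encard_basis' hI.isBasis']
    obtain ⟨u, v, huv, rfl⟩ := Set.ncard_eq_two.1 hIcard
    exact Set.encard_pair huv
  -- any point of X is in the closure of two other points of X
  have hspan : ∀ p q z : α, p ∈ X → q ∈ X → z ∈ X → p ≠ q → z ≠ p → z ≠ q →
      z ∈ M.closure {p, q} := by
    intro p q z hp hq hz hpq hzp hzq
    have hpq_sub : {p, q} ⊆ X := insert_subset hp (singleton_subset_iff.2 hq)
    have hpq_indep : M.Indep {p, q} := hXpts _ hpq_sub (by rw [Set.encard_pair hpq])
    by_contra hcl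
    have hzpq : z ∉ ({p, q} : Set α) := by simp [hzp, hzq]
    have hins : M.Indep (insert z {p, q}) := by
      rw [hpq_indep.insert_indep_iff_of_notMem hzpq]
      exact ⟨hXE hz, hcl⟩
    have hsub : insert z {p, q} ⊆ X := insert_subset hz hpq_sub
    obtain ⟨J, hJ, hJsub⟩ := hins.subset_isBasis'_of_subset hsub
    have hle : (insert z {p, q} : Set α).encard ≤ J.encard := encard_mono hJsub
    rw [← er_eq_encard_basis' hJ, her2,
      Set.encard_insert_of_notMem hzpq, Set.encard_pair hpq] at hle
    norm_num at hle
  -- find three distinct points of X other than x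
  have hXfin : X.Finite := Set.finite_of_ncard_ne_zero (by omega)
  have hc1 : (X \ {x}).ncard = n - 1 := by
    rw [Set.ncard_diff_singleton_of_mem hx, hXcard]
  obtain ⟨a, haX⟩ : (X \ {x}).Nonempty :=
    Set.nonempty_of_ncard_ne_zero (by omega)
  have hc2 : ((X \ {x}) \ {a}).ncard = n - 1 - 1 := by
    rw [Set.ncard_diff_singleton_of_mem haX, hc1]
  obtain ⟨b, hbX⟩ : ((X \ {x}) \ {a}).Nonempty :=
    Set.nonempty_of_ncard_ne_zero (by omega)
  have hc3 : (((X \ {x}) \ {a}) \ {b}).ncard = n - 1 - 1 - 1 := by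
    rw [Set.ncard_diff_singleton_of_mem hbX, hc2]
  obtain ⟨c, hcX⟩ : (((X \ {x}) \ {a}) \ {b}).Nonempty :=
    Set.nonempty_of_ncard_ne_zero (by omega)
  have haX' : a ∈ X \ {x} := haX
  have hbX' : b ∈ X \ {x} := hbX.1
  have hcX' : c ∈ X \ {x} := hcX.1.1
  have hab : a ≠ b := fun h => hbX.2 (by simp [h.symm])
  have hac : a ≠ c := fun h => hcX.1.2 (by simp [h.symm])
  have hbc : b ≠ c := fun h => hcX.2 (by simp [h.symm])
  -- now prove 3-connectivity of the deletion
  intro k hk1 hk2 A B hAB hdisj hineq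
  have hABE : A ∪ B = M.E \ {x} := hAB
  have hA_sub : A ⊆ M.E \ {x} := hABE ▸ subset_union_left
  have hB_sub : B ⊆ M.E \ {x} := hABE ▸ subset_union_right
  -- convert ranks from the deletion to M
  have erA : er (del M {x}) A = er M A := by
    rw [del, er_restrict, inter_eq_self_of_subset_left hA_sub]
  have erB : er (del M {x}) B = er M B := by
    rw [del, er_restrict, inter_eq_self_of_subset_left hB_sub]
  have erE : er (del M {x}) (del M {x}).E = er M (M.E \ {x}) := by
    rw [del, er_restrict]
    congr 1
    exact inter_eq_self_of_subset_left Subset.rfl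
  rw [erA, erB, erE] at hineq
  -- pigeonhole: two of a, b, c lie on the same side
  have hmem : ∀ z, z ∈ X \ {x} → z ∈ A ∨ z ∈ B := by
    intro z hz
    have : z ∈ A ∪ B := hABE ▸ ⟨hXE hz.1, hz.2⟩
    exact this
  obtain ⟨p, q, hpX, hqX, hpx, hqx, hpq, hside⟩ :
      ∃ p q : α, p ∈ X ∧ q ∈ X ∧ p ≠ x ∧ q ≠ x ∧ p ≠ q ∧
        ({p, q} ⊆ A ∨ {p, q} ⊆ B) := by
    have pair : ∀ u v : α, u ∈ A → v ∈ A → ({u, v} : Set α) ⊆ A :=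
      fun u v hu hv => insert_subset hu (singleton_subset_iff.2 hv)
    have pairB : ∀ u v : α, u ∈ B → v ∈ B → ({u, v} : Set α) ⊆ B :=
      fun u v hu hv => insert_subset hu (singleton_subset_iff.2 hv)
    rcases hmem a haX' with haA | haB
    · rcases hmem b hbX' with hbA | hbB
      · exact ⟨a, b, haX'.1, hbX'.1, haX'.2, hbX'.2, hab, Or.inl (pair _ _ haA hbA)⟩
      · rcases hmem c hcX' with hcA | hcB
        · exact ⟨a, c, haX'.1, hcX'.1, haX'.2, hcX'.2, hac, Or.inl (pair _ _ haA hcA)⟩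
        · exact ⟨b, c, hbX'.1, hcX'.1, hbX'.2, hcX'.2, hbc, Or.inr (pairB _ _ hbB hcB)⟩
    · rcases hmem b hbX' with hbA | hbB
      · rcases hmem c hcX' with hcA | hcB
        · exact ⟨b, c, hbX'.1, hcX'.1, hbX'.2, hcX'.2, hbc, Or.inl (pair _ _ hbA hcA)⟩
        · exact ⟨a, c, haX'.1, hcX'.1, haX'.2, hcX'.2, hac, Or.inr (pairB _ _ haB hcB)⟩
      · exact ⟨a, b, haX'.1, hbX'.1, haX'.2, hbX'.2, hab, Or.inr (pairB _ _ haB hbB)⟩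
  have hclx : x ∈ M.closure {p, q} :=
    hspan p q x hpX hqX hx hpq (Ne.symm hpx) (Ne.symm hqx)
  rcases hside with hsA | hsB
  · exact key_sep h3 hxE hclx k hk1 hk2 hABE hdisj hsA hineq
  · have := key_sep h3 hxE hclx k hk1 hk2 (by rw [union_comm]; exact hABE)
      hdisj.symm hsB (by rw [add_comm (er M B)]; exact hineq)
    exact this.symm

end SpikePaper
end

section
/- Let M be a matroid on 8 elements of rank 4 with no triangles and no U_{3,5}-restriction, and suppose the ground set E(M) admits a partition into four 2-element sets L_1, L_2, L_3, L_4 such that L_i ∪ L_j is a circuit of M for all distinct i, j. Then L_i ∪ L_j is also a cocircuit of M for all distinct i, j; that is, M is a rank-4 tipless spike. -/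
open Matroid Set

namespace SpikePaper

variable {α : Type*}

private lemma fin4_other : ∀ i j : Fin 4, i ≠ j → ∃ k l : Fin 4,
    k ≠ l ∧ i ≠ k ∧ i ≠ l ∧ j ≠ k ∧ j ≠ l ∧
    ∀ m : Fin 4, m = i ∨ m = j ∨ m = k ∨ m = l := by decide

private lemma enat_le_two_of_lt_three {a : ℕ∞} (h : a < 3) : a ≤ 2 := by
  lift a to ℕ using h.ne_top
  exact_mod_cast Nat.lt_succ_iff.mp (by exact_mod_cast h)


/-- a rank-4 matroid on 8 elements with no triangles, no
`U_{3,5}`-restriction, and a partition into four pairs whose pairwise unions are circuits,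
has those unions as cocircuits too (it is a rank-4 tipless spike). -/
theorem stmt10 {α : Type*} (M : Matroid α) (hcard : M.E.ncard = 8) (hrk : RankEq M 4)
    (htri : ∀ T, ¬ Triangle M T) (hu35 : ∀ X, ¬ U35Restriction M X)
    (L : Fin 4 → Set α) (hL2 : ∀ i, (L i).ncard = 2)
    (hdisj : ∀ i j : Fin 4, i ≠ j → Disjoint (L i) (L j))
    (hcup : (⋃ i, L i) = M.E)
    (hcirc : ∀ i j : Fin 4, i ≠ j → Circ M (L i ∪ L j)) :
    ∀ i j : Fin 4, i ≠ j → Cocirc M (L i ∪ L j) := by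
  have hEfin : M.E.Finite := by
    by_contra h
    rw [Set.Infinite.ncard h] at hcard
    norm_num at hcard
  have hLsub : ∀ i, L i ⊆ M.E := fun i => by rw [← hcup]; exact Set.subset_iUnion L i
  have hLfin : ∀ i, (L i).Finite := fun i => hEfin.subset (hLsub i)
  have hLe : ∀ i, (L i).encard = 2 := fun i => by
    rw [← (hLfin i).cast_ncard_eq, hL2 i]; rfl
  have hUe : ∀ i j : Fin 4, i ≠ j → (L i ∪ L j).encard = 4 := fun i j h => by
    rw [Set.encard_union_eq (hdisj i j h), hLe, hLe]; rfl
  -- every pair of ground elements is independent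
  have hpair : ∀ a b : α, a ∈ M.E → b ∈ M.E → M.Indep {a, b} := by
    intro a b ha hb
    obtain ⟨_, ⟨ia, rfl⟩, hia⟩ := (by rw [hcup]; exact ha : a ∈ ⋃ i, L i)
    obtain ⟨_, ⟨ib, rfl⟩, hib⟩ := (by rw [hcup]; exact hb : b ∈ ⋃ i, L i)
    have hcard2 : ({a, b} : Set α).encard ≤ 2 := by
      calc ({a, b} : Set α).encard ≤ ({b} : Set α).encard + 1 := Set.encard_insert_le _ _
      _ ≤ 2 := by rw [Set.encard_singleton]; norm_num
    have key : ∀ i j : Fin 4, i ≠ j → ({a, b} : Set α) ⊆ L i ∪ L j → M.Indep {a, b} := by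
      intro i j hij hsub
      by_contra hni
      have := (hcirc i j hij).2 ⟨hni, hsub.trans ((Set.union_subset (hLsub i) (hLsub j)))⟩ hsub
      rw [this, hUe i j hij] at hcard2
      norm_num at hcard2
    by_cases hab : ia = ib
    · obtain ⟨j, hj⟩ := exists_ne ia
      exact key ia j (Ne.symm hj) (by
        rintro x (rfl | rfl)
        · exact Or.inl hia
        · exact Or.inl (hab ▸ hib))
    · exact key ia ib hab (by rintro x (rfl | rfl); exacts [Or.inl hia, Or.inr hib])
  have hsmall : ∀ S ⊆ M.E, S.encard ≤ 2 → M.Indep S := by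
    intro S hSE hS2
    rcases S.eq_empty_or_nonempty with rfl | ⟨a, ha⟩
    · exact M.empty_indep
    rcases (S \ {a}).eq_empty_or_nonempty with he | ⟨b, hb⟩
    · have : S = {a, a} := by
        rw [Set.pair_eq_singleton]
        apply subset_antisymm _ (Set.singleton_subset_iff.2 ha)
        intro x hx
        by_contra hxa
        exact (Set.eq_empty_iff_forall_notMem.1 he) x ⟨hx, hxa⟩
      rw [this]; exact hpair a a (hSE ha) (hSE ha)
    · have hba : b ≠ a := hb.2
      have hsub : ({a, b} : Set α) ⊆ S := by
        rintro x (rfl | rfl); exacts [ha, hb.1]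
      have : ({a, b} : Set α) = S :=
        Set.Finite.eq_of_subset_of_encard_le' (Set.finite_of_encard_le_coe hS2) hsub
          (by rw [Set.encard_pair (Ne.symm hba)]; exact hS2)
      rw [← this]; exact hpair a b (hSE ha) (hSE (hsub (Or.inr rfl)))
  -- every ≤3 subset of the ground set is independent
  have h3 : ∀ S ⊆ M.E, S.encard ≤ 3 → M.Indep S := by
    intro S hSE hS3
    rcases lt_or_eq_of_le hS3 with hlt | he3
    · exact hsmall S hSE (enat_le_two_of_lt_three hlt)
    by_contra hni
    refine htri S ⟨⟨⟨hni, hSE⟩, ?_⟩, he3⟩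
    intro D hD hDS
    by_contra hne
    obtain ⟨x, hxS, hxD⟩ := Set.exists_of_ssubset (hDS.ssubset_of_ne hne)
    have hDsub : D ⊆ S \ {x} := fun y hy =>
      ⟨hDS hy, fun h => hxD (h ▸ hy)⟩
    have hD2 : D.encard ≤ 2 := by
      refine le_trans (Set.encard_mono hDsub) ?_
      have h1 : (S \ {x}).encard + 1 = S.encard := Set.encard_diff_singleton_add_one hxS
      rw [he3] at h1
      have : (S \ {x}).encard + 1 ≤ 2 + 1 := by rw [h1]; norm_num
      exact (WithTop.add_le_add_iff_right ENat.one_ne_top).1 this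
    exact hD.not_indep (hsmall D (hDS.trans hSE) hD2)
  -- base facts
  obtain ⟨B0, hB0b, hB0c⟩ := hrk
  have hB0 : M.IsBase B0 := isBasis_ground_iff.1 hB0b
  have hB0e : B0.encard = 4 := by
    rw [← (hEfin.subset hB0.subset_ground).cast_ncard_eq, hB0c]; rfl
  have hbase4 : ∀ B, M.IsBase B → B.encard = 4 := fun B hB => by
    rw [hB.encard_eq_encard_of_isBase hB0, hB0e]
  have hindep4 : ∀ B, M.Indep B → B.encard = 4 → M.IsBase B := by
    intro B hBi hBe
    obtain ⟨B', hB', hsub⟩ := hBi.exists_isBase_superset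
    have hBB' : B = B' :=
      Set.Finite.eq_of_subset_of_encard_le' (hEfin.subset hB'.subset_ground) hsub
        (by rw [hbase4 B' hB', hBe])
    rwa [hBB']
  -- main part
  intro i j hij
  obtain ⟨k, l, hkl, hik, hil, hjk, hjl, hcov⟩ := fin4_other i j hij
  set K := L i ∪ L j with hKdef
  set H := L k ∪ L l with hHdef
  have hKH : Disjoint K H := by
    rw [hKdef, hHdef, Set.disjoint_union_left]
    constructor <;> rw [Set.disjoint_union_right]
    exacts [⟨hdisj i k hik, hdisj i l hil⟩, ⟨hdisj j k hjk, hdisj j l hjl⟩]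
  have hE : M.E = K ∪ H := by
    rw [← hcup]
    apply subset_antisymm
    · rintro x hx
      rw [Set.mem_iUnion] at hx
      obtain ⟨m, hm⟩ := hx
      rcases hcov m with rfl | rfl | rfl | rfl
      exacts [Or.inl (Or.inl hm), Or.inl (Or.inr hm), Or.inr (Or.inl hm), Or.inr (Or.inr hm)]
    · rintro x ((hx | hx) | (hx | hx)) <;> exact Set.mem_iUnion.2 ⟨_, hx⟩
  have hKsub : K ⊆ M.E := Set.union_subset (hLsub i) (hLsub j)
  have hHsub : H ⊆ M.E := Set.union_subset (hLsub k) (hLsub l)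
  have hHfin : H.Finite := hEfin.subset hHsub
  have hHe : H.encard = 4 := hUe k l hkl
  have hHdep : M.Dep H := (hcirc k l hkl).1
  -- a 3-element basis of H
  obtain ⟨a, ha⟩ : H.Nonempty := by
    rw [← Set.encard_ne_zero, hHe]; norm_num
  set J := H \ {a} with hJdef
  have hJsub : J ⊆ H := Set.diff_subset
  have hJE : J ⊆ M.E := hJsub.trans hHsub
  have hJe : J.encard = 3 := by
    have h1 : J.encard + 1 = H.encard := Set.encard_diff_singleton_add_one ha
    rw [hHe] at h1
    have : J.encard + 1 = 3 + 1 := by rw [h1]; rfl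
    exact WithTop.add_right_cancel ENat.one_ne_top this
  have hJindep : M.Indep J := h3 J hJE (le_of_eq hJe)
  have haJ : a ∉ J := fun h => h.2 rfl
  have hacl : a ∈ M.closure J :=
    hJindep.mem_closure_iff.2 (Or.inl (by
      rwa [hJdef, Set.insert_diff_singleton, Set.insert_eq_of_mem ha]))
  have hHcl : H ⊆ M.closure J := by
    intro x hx
    by_cases hxa : x = a
    · exact hxa ▸ hacl
    · exact M.subset_closure J hJE ⟨hx, hxa⟩
  -- no element outside H is in the closure of J
  have hflat : ∀ f ∈ M.E, f ∈ M.closure J → f ∈ H := by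
    intro f hfE hfcl
    by_contra hfH
    refine hu35 (insert f H) ⟨Set.insert_subset hfE hHsub, ?_, ?_, ?_⟩
    · have : (insert f H).encard = 5 := by
        rw [Set.encard_insert_of_notMem hfH, hHe]; rfl
      rw [Set.ncard_def, this]; rfl
    · refine ⟨J, hJindep.isBasis_of_subset_of_subset_closure
        (hJsub.trans (Set.subset_insert f H)) ?_, ?_⟩
      · exact Set.insert_subset hfcl hHcl
      · rw [Set.ncard_def, hJe]; rfl
    · intro S hS hS3
      exact h3 S (hS.trans (Set.insert_subset hfE hHsub)) hS3
  have hclHH : ∀ f, f ∈ M.closure J → f ∈ H := fun f hf =>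
    hflat f (M.closure_subset_ground J hf) hf
  -- K is a cocircuit
  constructor
  · -- K is dependent in the dual
    refine ⟨fun hKi => ?_, by rwa [Matroid.dual_ground]⟩
    rw [Matroid.dual_indep_iff_exists'] at hKi
    obtain ⟨-, B, hB, hdisjKB⟩ := hKi
    have hBH : B ⊆ H := by
      intro x hx
      rcases (hE ▸ hB.subset_ground hx) with hxK | hxH
      · exact absurd hxK (Set.disjoint_right.1 hdisjKB hx)
      · exact hxH
    have : B = H := Set.Finite.eq_of_subset_of_encard_le' hHfin hBH
      (by rw [hbase4 B hB, hHe])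
    exact hHdep.not_indep (this ▸ hB.indep)
  · -- minimality
    intro D hD hDK
    by_contra hne
    obtain ⟨f, hfK, hfD⟩ := Set.exists_of_ssubset (hDK.ssubset_of_ne hne)
    have hfE : f ∈ M.E := hKsub hfK
    have hfH : f ∉ H := Set.disjoint_left.1 hKH hfK
    have hfJ : f ∉ J := fun h => hfH (hJsub h)
    have hfcl : f ∉ M.closure J := fun h => hfH (hclHH f h)
    have hBind : M.Indep (insert f J) :=
      (hJindep.insert_indep_iff_of_notMem hfJ).2 ⟨hfE, hfcl⟩
    have hBe : (insert f J).encard = 4 := by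
      rw [Set.encard_insert_of_notMem hfJ, hJe]; rfl
    have hBbase : M.IsBase (insert f J) := hindep4 _ hBind hBe
    have hdisjD : Disjoint D (insert f J) := by
      rw [Set.disjoint_left]
      rintro x hxD (rfl | hxJ)
      · exact hfD hxD
      · exact Set.disjoint_left.1 hKH (hDK hxD) (hJsub hxJ)
    exact hD.not_indep (Matroid.dual_indep_iff_exists'.2
      ⟨hDK.trans hKsub, insert f J, hBbase, hdisjD⟩)

end SpikePaper
end

section
/- Let M be a matroid of rank 4 and corank 4 on 8 elements such that for every element e, the contraction M / e is a rank-3 tipped spike. Then for each x ∈ E(M) there exists an element y ≠ x such that {x, y} is contained in at least three distinct 4-element circuits of M. -/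
open Matroid Set

namespace SpikePaper

variable {α : Type*}

/-! ### Auxiliary lemmas for the proof of Statement 13 -/

section ConLemmas

variable {M N : Matroid α} {e : α}

lemma con_ground (M : Matroid α) (e : α) : (con M {e}).E = M.E \ {e} := by
  simp [con, del]

lemma con_base_iff (he : M.Indep {e}) {B : Set α} :
    (con M {e}).IsBase B ↔ B ⊆ M.E \ {e} ∧ M.IsBase (insert e B) := by
  have heE : e ∈ M.E := he.subset_ground rfl
  set R : Set α := M.E \ {e} with hR
  have hRE : R ⊆ M✶.E := diff_subset
  have hstep1 : (con M {e}).IsBase B ↔ (M✶.IsBasis (R \ B) R ∧ B ⊆ R) := by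
    have h1 : (con M {e}).IsBase B ↔
        (M✶ ↾ R).IsBase ((M✶ ↾ R).E \ B) ∧ B ⊆ (M✶ ↾ R).E := by
      exact dual_isBase_iff' (M := M✶ ↾ R)
    rw [h1]
    rw [Matroid.restrict_ground_eq]
    rw [Matroid.isBase_restrict_iff hRE]
  rw [hstep1]
  constructor
  · rintro ⟨hD, hBR⟩
    set D : Set α := R \ B with hDdef
    have hDR : D ⊆ R := diff_subset
    have hED : M.E \ D = insert e B := by
      ext a
      simp only [hDdef, hR, mem_diff, mem_singleton_iff, mem_insert_iff, not_and, not_not]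
      constructor
      · rintro ⟨haE, h2⟩
        by_cases hae : a = e
        · exact Or.inl hae
        · exact Or.inr (h2 ⟨haE, hae⟩)
      · rintro (rfl | haB)
        · exact ⟨heE, fun h => absurd rfl h.2⟩
        · exact ⟨(hBR haB).1, fun _ => haB⟩
    obtain ⟨B₀, hB₀, hB₀sub⟩ := (Matroid.Coindep.exists_isBase_subset_compl (hD.indep : M✶.Indep D))
    -- maximality: D = (M.E \ B₀) ∩ R
    have hDB₀ : Disjoint D B₀ := by
      rw [disjoint_comm]
      exact Set.disjoint_of_subset_left hB₀sub disjoint_sdiff_left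
    have hDsub : D ⊆ (M.E \ B₀) ∩ R := by
      intro a ha
      exact ⟨⟨(hDR ha).1, fun h => hDB₀.ne_of_mem ha h rfl⟩, hDR ha⟩
    have hind : M✶.Indep ((M.E \ B₀) ∩ R) :=
      hB₀.compl_isBase_dual.indep.subset inter_subset_left
    have hDeq : D = (M.E \ B₀) ∩ R := hD.eq_of_subset_indep hind hDsub inter_subset_right
    by_cases heB₀ : e ∈ B₀
    · have hEB₀R : M.E \ B₀ ⊆ R := by
        intro a ha
        exact ⟨ha.1, fun h => ha.2 (h ▸ heB₀)⟩
      have : D = M.E \ B₀ := by rw [hDeq, inter_eq_left.2 hEB₀R]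
      have hB₀eq : B₀ = insert e B := by
        rw [← hED, this, diff_diff_cancel_left hB₀.subset_ground]
      exact ⟨hBR, hB₀eq ▸ hB₀⟩
    · exfalso
      -- then B₀ = B and we contradict ∅ being a basis of {e}
      have hEB₀ : M.E \ B₀ = insert e D := by
        ext a
        simp only [mem_diff, mem_insert_iff]
        constructor
        · rintro ⟨haE, haB₀⟩
          by_cases hae : a = e
          · exact Or.inl hae
          · right
            rw [hDeq]
            exact ⟨⟨haE, haB₀⟩, haE, hae⟩
        · rintro (rfl | haD)
          · exact ⟨heE, heB₀⟩
          · exact ⟨(hDR haD).1, fun h => hDB₀.ne_of_mem haD h rfl⟩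
      have hB₀B : B₀ = B := by
        have h1 : B₀ = M.E \ (M.E \ B₀) := (diff_diff_cancel_left hB₀.subset_ground).symm
        rw [h1, hEB₀]
        have : M.E \ insert e D = (M.E \ D) \ {e} := by
          rw [diff_diff]
          congr 1
          ext a; simp [or_comm]
        rw [this, hED]
        simp only [insert_diff_of_mem, mem_singleton_iff]
        rw [diff_singleton_eq_self (fun h => (hBR h).2 rfl)]
      have hBbase : M.IsBase B := hB₀B ▸ hB₀
      have hiff := hBbase.inter_isBasis_iff_compl_inter_isBasis_dual
        (X := {e}) (singleton_subset_iff.2 heE)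
      have hint : (M.E \ B) ∩ (M.E \ {e}) = D := by
        rw [hDdef, hR]
        ext a
        simp only [mem_inter_iff, mem_diff, mem_singleton_iff]
        tauto
      rw [hint] at hiff
      have hbasis : M.IsBasis (B ∩ {e}) {e} := hiff.2 hD
      have hBe : B ∩ {e} = ∅ := by
        ext a
        simp only [mem_inter_iff, mem_singleton_iff, mem_empty_iff_false, iff_false, not_and]
        rintro haB rfl
        exact (hBR haB).2 rfl
      rw [hBe] at hbasis
      have := hbasis.eq_of_subset_indep he (empty_subset _) subset_rfl
      exact (singleton_ne_empty e) this.symm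
  · rintro ⟨hBR, hB⟩
    refine ⟨?_, hBR⟩
    have hiff := hB.inter_isBasis_iff_compl_inter_isBasis_dual
      (X := {e}) (singleton_subset_iff.2 heE)
    have h1 : insert e B ∩ {e} = {e} := by
      ext a; simp only [mem_inter_iff, mem_insert_iff, mem_singleton_iff]
      constructor
      · rintro ⟨_, rfl⟩; rfl
      · rintro rfl; exact ⟨Or.inl rfl, rfl⟩
    have h2 : (M.E \ insert e B) ∩ (M.E \ {e}) = R \ B := by
      ext a
      simp only [mem_inter_iff, mem_diff, mem_insert_iff, mem_singleton_iff, hR]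
      tauto
    rw [h1, h2] at hiff
    exact hiff.1 (he.isBasis_self)

lemma con_indep_iff (he : M.Indep {e}) {J : Set α} :
    (con M {e}).Indep J ↔ J ⊆ M.E \ {e} ∧ M.Indep (insert e J) := by
  constructor
  · intro hJ
    obtain ⟨B, hB, hJB⟩ := hJ.exists_isBase_superset
    rw [con_base_iff he] at hB
    exact ⟨hJB.trans hB.1, hB.2.indep.subset (insert_subset_insert hJB)⟩
  · rintro ⟨hJR, hJi⟩
    obtain ⟨B', hB', hsub⟩ := hJi.exists_isBase_superset
    have heB' : e ∈ B' := hsub (mem_insert _ _)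
    have hbase : (con M {e}).IsBase (B' \ {e}) := by
      rw [con_base_iff he]
      refine ⟨diff_subset_diff_left hB'.subset_ground, ?_⟩
      rwa [insert_diff_singleton, insert_eq_of_mem heB']
    refine hbase.indep.subset (subset_diff_singleton ((subset_insert e J).trans hsub) ?_)
    exact fun h => (hJR h).2 rfl

lemma con_dep (he : M.Indep {e}) {J : Set α} (hJ : (con M {e}).Dep J) :
    M.Dep (insert e J) := by
  have heE : e ∈ M.E := he.subset_ground rfl
  have hJR : J ⊆ M.E \ {e} := by
    have := hJ.subset_ground
    rwa [con_ground] at this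
  rw [dep_iff] at hJ ⊢
  refine ⟨fun hi => hJ.1 ((con_indep_iff he).2 ⟨hJR, hi⟩), ?_⟩
  exact insert_subset heE (hJR.trans diff_subset)

end ConLemmas

section SpikeLemmas

variable {N : Matroid α} {C P : Set α}

lemma Circ.ssub_indep (hC : Circ N C) (hP : P ⊆ C) (hne : P ≠ C) : N.Indep P := by
  by_contra h
  exact hne (hC.2 ⟨h, hP.trans hC.1.subset_ground⟩ hP)

lemma indep_card_contra {B I : Set α} (hB : N.Indep B) (hI : N.Indep I)
    (hsub : I ⊆ N.closure B) (hlt : B.encard < I.encard) : False := by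
  obtain ⟨f, hf, hins⟩ := hB.augment hI hlt
  rcases (hB.mem_closure_iff).1 (hsub hf.1) with h | h
  · exact h.not_indep hins
  · exact hf.2 h

lemma cross_aux {t u u' v v' : α}
    (hitv : N.Indep {t, v}) (hitu : N.Indep {t, u}) (hiv : N.Indep {v})
    (hduv : N.Dep {u, v}) (hdu : N.Dep {t, u, u'}) (hdv : N.Dep {t, v, v'}) :
    ({u, u', v, v'} : Set α) ⊆ N.closure {t, v} := by
  have htmem : t ∈ N.closure {t, v} :=
    N.subset_closure {t, v} hitv.subset_ground (mem_insert _ _)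
  have hvmem : v ∈ N.closure {t, v} :=
    N.subset_closure {t, v} hitv.subset_ground (by simp)
  have hv' : v' ∈ N.closure {t, v} := by
    rw [hitv.mem_closure_iff]
    left
    have : insert v' ({t, v} : Set α) = {t, v, v'} := by ext a; simp; tauto
    rwa [this]
  have hu : u ∈ N.closure {t, v} := by
    have h1 : u ∈ N.closure {v} := by
      rw [hiv.mem_closure_iff]
      left
      have : insert u ({v} : Set α) = {u, v} := rfl
      rwa [this]
    exact N.closure_subset_closure (by simp) h1
  have hu' : u' ∈ N.closure {t, v} := by
    have h2 : u' ∈ N.closure {t, u} := by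
      rw [hitu.mem_closure_iff]
      left
      have : insert u' ({t, u} : Set α) = {t, u, u'} := by ext a; simp; tauto
      rwa [this]
    have hsub : N.closure {t, u} ⊆ N.closure {t, v} :=
      closure_subset_closure_of_subset_closure
        (insert_subset htmem (singleton_subset_iff.2 hu))
    exact hsub h2
  exact insert_subset hu (insert_subset hu' (insert_subset hvmem (singleton_subset_iff.2 hv')))

lemma spike_pair_indep {t : α} {xs ys : Fin 3 → α}
    (hS : IsTippedSpike N 3 t xs ys) :
    ∀ a ∈ N.E, ∀ b ∈ N.E, N.Indep {a, b} := by
  obtain ⟨-, ⟨hxinj, hyinj, hxy, htx, hty⟩, hE, -, hC, hJ⟩ := hS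
  have htri : ∀ i : Fin 3, ({t, xs i, ys i} : Set α).encard = 3 := by
    intro i
    rw [encard_insert_of_notMem (by
        simp only [mem_insert_iff, mem_singleton_iff]; push_neg
        exact ⟨htx i, hty i⟩), encard_pair (hxy i i)]
    norm_num
  have htw : ∀ i : Fin 3, ∀ w ∈ ({xs i, ys i} : Set α), N.Indep {t, w} := by
    intro i w hw
    refine (hC i).ssub_indep (insert_subset (mem_insert _ _)
      (singleton_subset_iff.2 (mem_insert_of_mem t hw))) (fun h => ?_)
    have h3 := htri i
    rw [← h] at h3
    have h2 : ({t, w} : Set α).encard ≤ 2 := by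
      apply (encard_insert_le _ _).trans
      rw [encard_singleton]
      norm_num
    rw [h3] at h2
    norm_num at h2
  have ht : N.Indep {t} := ((htw 0 (xs 0) (by simp)).subset (by simp))
  -- each leg is independent
  have hleg : ∀ i : Fin 3, N.Indep {xs i, ys i} := by
    intro i
    obtain ⟨I, hI, hIc⟩ := hJ {i} ⟨i, rfl⟩ (by
      intro h
      have h1 : ({i} : Set (Fin 3)).ncard = 1 := ncard_singleton i
      have h2 : (univ : Set (Fin 3)).ncard = 3 := by
        rw [ncard_univ]; simp
      rw [h] at h1; rw [h1] at h2; exact absurd h2 (by norm_num))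
    have hU : (⋃ k ∈ ({i} : Set (Fin 3)), ({xs k, ys k} : Set α)) = {xs i, ys i} := by
      simp
    rw [hU] at hI
    rw [ncard_singleton] at hIc
    have hpair : ({xs i, ys i} : Set α).ncard = 2 := ncard_pair (hxy i i)
    have : I = {xs i, ys i} := by
      refine eq_of_subset_of_ncard_le hI.subset ?_ (toFinite _)
      rw [hIc, hpair]
    exact this ▸ hI.indep
  -- main case analysis
  intro a ha b hb
  rw [hE] at ha hb
  rcases ha with rfl | ha
  · rcases hb with rfl | hb
    · rwa [pair_eq_singleton]
    · simp only [mem_iUnion] at hb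
      obtain ⟨j, hbj⟩ := hb
      exact htw j b hbj
  · simp only [mem_iUnion] at ha
    obtain ⟨i, hai⟩ := ha
    rcases hb with rfl | hb
    · rw [pair_comm]
      exact htw i a hai
    · simp only [mem_iUnion] at hb
      obtain ⟨j, hbj⟩ := hb
      by_cases hij : i = j
      · subst hij
        exact (hleg i).subset (insert_subset hai (singleton_subset_iff.2 hbj))
      · -- cross case
        by_contra hni
        have haE : a ∈ N.E := by
          rw [hE]; right; exact mem_iUnion.2 ⟨i, hai⟩
        have hbE : b ∈ N.E := by
          rw [hE]; right; exact mem_iUnion.2 ⟨j, hbj⟩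
        have hdep : N.Dep {a, b} :=
          ⟨hni, insert_subset haE (singleton_subset_iff.2 hbE)⟩
        -- partners
        have hapair : ∃ a', ({a, a'} : Set α) = {xs i, ys i} := by
          rcases hai with rfl | h
          · exact ⟨ys i, rfl⟩
          · simp at h; subst h
            exact ⟨xs i, by ext z; simp; tauto⟩
        have hbpair : ∃ b', ({b, b'} : Set α) = {xs j, ys j} := by
          rcases hbj with rfl | h
          · exact ⟨ys j, rfl⟩
          · simp at h; subst h
            exact ⟨xs j, by ext z; simp; tauto⟩
        obtain ⟨a', haeq⟩ := hapair
        obtain ⟨b', hbeq⟩ := hbpair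
        have hdu : N.Dep {t, a, a'} := by
          have : ({t, a, a'} : Set α) = {t, xs i, ys i} := by
            rw [show ({t, a, a'} : Set α) = insert t {a, a'} from rfl, haeq]
          rw [this]; exact (hC i).1
        have hdv : N.Dep {t, b, b'} := by
          have : ({t, b, b'} : Set α) = {t, xs j, ys j} := by
            rw [show ({t, b, b'} : Set α) = insert t {b, b'} from rfl, hbeq]
          rw [this]; exact (hC j).1
        have hitv : N.Indep {t, b} := htw j b hbj
        have hitu : N.Indep {t, a} := htw i a hai
        have hiv : N.Indep {b} := hitv.subset (by simp)
        have hcl := cross_aux hitv hitu hiv hdep hdu hdv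
        -- basis of the two legs
        obtain ⟨I, hI, hIc⟩ := hJ {i, j} ⟨i, by simp⟩ (by
          intro h
          have h1 : ({i, j} : Set (Fin 3)).ncard = 2 := ncard_pair hij
          have h2 : (univ : Set (Fin 3)).ncard = 3 := by rw [ncard_univ]; simp
          rw [h] at h1; rw [h1] at h2; exact absurd h2 (by norm_num))
        rw [ncard_pair hij] at hIc
        have hU : (⋃ k ∈ ({i, j} : Set (Fin 3)), ({xs k, ys k} : Set α))
            = {a, a', b, b'} := by
          have : (⋃ k ∈ ({i, j} : Set (Fin 3)), ({xs k, ys k} : Set α))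
              = {xs i, ys i} ∪ {xs j, ys j} := by
            simp [Set.biUnion_insert]
          rw [this, ← haeq, ← hbeq]
          ext z; simp; tauto
        rw [hU] at hI
        have hIcl : I ⊆ N.closure {t, b} := hI.subset.trans hcl
        have hIfin : I.Finite := (toFinite ({a, a', b, b'} : Set α)).subset hI.subset
        have hIe : I.encard = 3 := by
          rw [← hIfin.cast_ncard_eq, hIc]; rfl
        have htb : t ≠ b := by
          rcases hbj with rfl | h
          · exact htx j
          · simp at h; subst h; exact hty j
        have hBe : ({t, b} : Set α).encard = 2 := encard_pair htb
        exact indep_card_contra hitv hI.indep hIcl (by rw [hBe, hIe]; norm_num)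

lemma spike_small_indep {t : α} {xs ys : Fin 3 → α}
    (hS : IsTippedSpike N 3 t xs ys) :
    ∀ P ⊆ N.E, P.encard ≤ 2 → N.Indep P := by
  intro P hPE _hP2
  rcases P.eq_empty_or_nonempty with rfl | ⟨a, ha⟩
  · exact N.empty_indep
  rcases (P \ {a}).eq_empty_or_nonempty with hem | ⟨b, hb⟩
  · have : P = {a} := by
      have h1 : P ⊆ {a} := by
        intro z hz
        by_contra h
        exact absurd (Set.mem_diff_of_mem hz h) (by rw [hem]; exact notMem_empty z)
      exact h1.antisymm (singleton_subset_iff.2 ha)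
    rw [this]
    have := spike_pair_indep hS a (hPE ha) a (hPE ha)
    rwa [pair_eq_singleton] at this
  · have hba : b ≠ a := hb.2
    have hsub : ({a, b} : Set α) ⊆ P := insert_subset ha (singleton_subset_iff.2 hb.1)
    have : ({a, b} : Set α) = P := by
      refine (toFinite ({a, b} : Set α)).eq_of_subset_of_encard_le hsub ?_
      rw [encard_pair (Ne.symm hba)]
      exact _hP2
    rw [← this]
    exact spike_pair_indep hS a (hPE ha) b (hPE hb.1)

end SpikeLemmas


/-- if `M` has rank 4 and corank 4 on 8 elements and every single-element
contraction is a rank-3 tipped spike, then every `x` has a buddy `y` with `{x, y}` inside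
three distinct 4-element circuits. -/
theorem stmt13 {α : Type*} (M : Matroid α) (hcard : M.E.ncard = 8)
    (hrk : RankEq M 4) (hrk' : RankEq M✶ 4)
    (hcon : ∀ e ∈ M.E, ∃ (t : α) (x y : Fin 3 → α),
      IsTippedSpike (con M {e}) 3 t x y) :
    ∀ x ∈ M.E, ∃ y ∈ M.E, y ≠ x ∧ ThreeFourCircs M x y := by
  have hfinE : M.E.Finite := by
    by_contra h
    rw [Set.Infinite.ncard h] at hcard
    norm_num at hcard
  obtain ⟨I₀, hI₀, hI₀c⟩ := hrk
  have hI₀ne : I₀.Nonempty := by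
    rw [← Set.ncard_pos (hfinE.subset hI₀.subset) (s := I₀)]
    rw [hI₀c]; norm_num
  obtain ⟨e₀, he₀I⟩ := hI₀ne
  have he₀ : M.Indep {e₀} := hI₀.indep.subset (singleton_subset_iff.2 he₀I)
  have he₀E : e₀ ∈ M.E := hI₀.subset_ground (hI₀.subset he₀I)
  have halos : ∀ a ∈ M.E, M.Indep {a} := by
    intro a haE
    by_cases hae : a = e₀
    · subst hae; exact he₀
    · obtain ⟨t', xs', ys', hS'⟩ := hcon e₀ he₀E
      have haN : a ∈ (con M {e₀}).E := by
        rw [con_ground]; exact ⟨haE, hae⟩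
      have h1 := spike_pair_indep hS' a haN a haN
      rw [pair_eq_singleton] at h1
      have h2 := (con_indep_iff he₀).1 h1
      exact h2.2.subset (subset_insert _ _)
  have hsmall : ∀ D ⊆ M.E, D.encard ≤ 3 → M.Indep D := by
    intro D hDE hD3
    by_contra hni
    rcases D.eq_empty_or_nonempty with rfl | ⟨a, haD⟩
    · exact hni M.empty_indep
    have haE : a ∈ M.E := hDE haD
    have hai : M.Indep {a} := halos a haE
    obtain ⟨t', xs', ys', hS'⟩ := hcon a haE
    have hPE : D \ {a} ⊆ (con M {a}).E := by
      rw [con_ground]; exact diff_subset_diff_left hDE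
    have hP2 : (D \ {a}).encard ≤ 2 := by
      have h1 := Set.encard_diff_singleton_add_one haD
      have h4 : (D \ {a}).encard + 1 ≤ 2 + 1 := by
        rw [h1]; exact hD3.trans_eq (by norm_num)
      exact (WithTop.add_le_add_iff_right WithTop.one_ne_top).1 h4
    have hPi := spike_small_indep hS' (D \ {a}) hPE hP2
    have h5 := ((con_indep_iff hai).1 hPi).2
    rw [insert_diff_singleton, insert_eq_of_mem haD] at h5
    exact hni h5
  intro x hx
  obtain ⟨t, xs, ys, hS⟩ := hcon x hx
  have hxi : M.Indep {x} := halos x hx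
  obtain ⟨-, ⟨hxinj, hyinj, hxy, htx, hty⟩, hE, -, hC, -⟩ := hS
  have hgr : (con M {x}).E = M.E \ {x} := con_ground M x
  have htN : t ∈ (con M {x}).E := by rw [hE]; exact mem_insert _ _
  have htE : t ∈ M.E := (hgr ▸ htN).1
  have htnex : t ≠ x := fun h => ((hgr ▸ htN).2 (by simp [h]))
  have hxsN : ∀ i, xs i ∈ (con M {x}).E := fun i => by
    rw [hE]; exact mem_insert_of_mem _ (mem_iUnion.2 ⟨i, by simp⟩)
  have hysN : ∀ i, ys i ∈ (con M {x}).E := fun i => by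
    rw [hE]; exact mem_insert_of_mem _ (mem_iUnion.2 ⟨i, by simp⟩)
  have hxsx : ∀ i, xs i ≠ x := fun i h => (hgr ▸ hxsN i).2 (by simp [h])
  have hysx : ∀ i, ys i ≠ x := fun i h => (hgr ▸ hysN i).2 (by simp [h])
  set Ds : Fin 3 → Set α := fun i => insert x {t, xs i, ys i} with hDs
  have hDepD : ∀ i, M.Dep (Ds i) := fun i => con_dep hxi (hC i).1
  have hencD : ∀ i, (Ds i).encard = 4 := by
    intro i
    rw [hDs]
    simp only []
    rw [encard_insert_of_notMem (by
        simp only [mem_insert_iff, mem_singleton_iff]; push_neg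
        exact ⟨Ne.symm htnex, Ne.symm (hxsx i), Ne.symm (hysx i)⟩),
      encard_insert_of_notMem (by
        simp only [mem_insert_iff, mem_singleton_iff]; push_neg
        exact ⟨htx i, hty i⟩),
      encard_pair (hxy i i)]
    norm_num
  have hcircD : ∀ i, Circ M (Ds i) := by
    intro i
    refine ⟨hDepD i, fun D hD hsub => ?_⟩
    by_contra hne
    have hss : D ⊂ Ds i := ssubset_iff_subset_ne.2 ⟨hsub, hne⟩
    have hfinDs : (Ds i).Finite := hfinE.subset (hDepD i).subset_ground
    have hlt : D.encard < 4 := by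
      rw [← hencD i]; exact (hfinDs.subset hsub).encard_lt_encard hss
    have hDfin : D.Finite := hfinDs.subset hsub
    have hle : D.encard ≤ 3 := by
      rw [← hDfin.cast_ncard_eq] at hlt ⊢
      have h4 : ((4 : ℕ) : ℕ∞) = 4 := by norm_num
      rw [← h4, Nat.cast_lt] at hlt
      have : D.ncard ≤ 3 := by omega
      exact le_trans (Nat.cast_le.2 this) (by norm_num)
    exact hD.not_indep (hsmall D hD.subset_ground hle)
  have hmemD : ∀ i, xs i ∈ Ds i := fun i => by simp [hDs]
  have hnotD : ∀ i j, i ≠ j → xs i ∉ Ds j := by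
    intro i j hij h
    simp only [hDs, mem_insert_iff, mem_singleton_iff] at h
    rcases h with h | h | h | h
    · exact hxsx i h
    · exact htx i h.symm
    · exact hij (hxinj h)
    · exact hxy i j h
  have hDne : ∀ i j, i ≠ j → Ds i ≠ Ds j := by
    intro i j hij h
    exact hnotD i j hij (h ▸ hmemD i)
  have hpairsub : ∀ i, ({x, t} : Set α) ⊆ Ds i := by
    intro i
    exact insert_subset (mem_insert _ _) (singleton_subset_iff.2 (by simp [hDs]))
  exact ⟨t, htE, htnex, Ds 0, Ds 1, Ds 2, hcircD 0, hcircD 1, hcircD 2,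
    hencD 0, hencD 1, hencD 2,
    hDne 0 1 (by decide), hDne 0 2 (by decide), hDne 1 2 (by decide),
    hpairsub 0, hpairsub 1, hpairsub 2⟩

end SpikePaper
end

section
/- Let M be a 3-connected matroid with rank 3 and corank at least 3 that has no restriction isomorphic to U_{2,5} and at least 8 elements, and suppose that for every element e, the deletion M \ e is 3-connected. If every single-element deletion of M is a rank-3 tipped spike (on 7 elements), then |E(M)| = 8 and M has no restriction isomorphic to U_{2,4}. -/
open Matroid Set

namespace SpikePaper

variable {α : Type*}

/-! ### Auxiliary lemmas -/

lemma encard_le_of_indep_subset_closure {M : Matroid α} {I J : Set α}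
    (hJ : M.Indep J) (hI : M.Indep I) (hJI : J ⊆ M.closure I) : J.encard ≤ I.encard := by
  obtain ⟨J', hJ', hJJ'⟩ := hJ.subset_isBasis_of_subset hJI (M.closure_subset_ground I)
  calc J.encard ≤ J'.encard := encard_le_encard hJJ'
    _ = I.encard := hJ'.isBase_restrict.encard_eq_encard_of_isBase hI.isBasis_closure.isBase_restrict

lemma Circ.mem_closure_diff {N : Matroid α} {C : Set α} {r : α}
    (hC : Circ N C) (hr : r ∈ C) : r ∈ N.closure (C \ {r}) := by
  have hind : N.Indep (C \ {r}) := by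
    by_contra h
    have hdep : N.Dep (C \ {r}) := ⟨h, (diff_subset).trans hC.1.subset_ground⟩
    have := hC.2 hdep diff_subset
    exact (this ▸ (fun (h : r ∈ C \ {r}) => h.2 rfl)) hr
  rw [hind.mem_closure_iff]
  left
  rw [insert_diff_singleton, insert_eq_of_mem hr]
  exact hC.1

lemma triple_diff_subset1 (p q r : α) : ({p, q, r} : Set α) \ {p} ⊆ {q, r} := by
  rintro w ⟨hw, hwp⟩
  simp only [mem_insert_iff, mem_singleton_iff] at *
  tauto

lemma triple_diff_subset2 (p q r : α) : ({p, q, r} : Set α) \ {q} ⊆ {p, r} := by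
  rintro w ⟨hw, hwq⟩
  simp only [mem_insert_iff, mem_singleton_iff] at *
  tauto

lemma triple_diff_subset3 (p q r : α) : ({p, q, r} : Set α) \ {r} ⊆ {p, q} := by
  rintro w ⟨hw, hwr⟩
  simp only [mem_insert_iff, mem_singleton_iff] at *
  tauto

/-- a 3-connected simple rank-3 matroid with corank at least 3, no
`U_{2,5}`-restriction, at least 8 elements, all of whose single-element deletions are
3-connected rank-3 tipped spikes, has exactly 8 elements and no `U_{2,4}`-restriction. -/
theorem stmt16 {α : Type*} (M : Matroid α) (h3 : ThreeConnected M) (hsimp : Simple M)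
    (hrk : RankEq M 3) (hcor : ∃ k, RankEq M✶ k ∧ 3 ≤ k)
    (hnoU25 : ∀ X, ¬ LineRestriction M X 5)
    (hcard : 8 ≤ M.E.ncard)
    (hdel3 : ∀ e ∈ M.E, ThreeConnected (del M {e}))
    (hdelspike : ∀ e ∈ M.E, ∃ (t : α) (x y : Fin 3 → α),
      IsTippedSpike (del M {e}) 3 t x y) :
    M.E.ncard = 8 ∧ ∀ X, ¬ LineRestriction M X 4 := by
  classical
  have hne : M.E.Nonempty := Set.nonempty_of_ncard_ne_zero (by omega)
  have hEcard : M.E.encard = 8 := by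
    obtain ⟨e, he⟩ := hne
    obtain ⟨t, x, y, hr3, ⟨hxinj, hyinj, hxy, htx, hty⟩, hE, hrank, hlegs, hJr⟩ :=
      hdelspike e he
    have hgnd : (del M {e}).E = M.E \ {e} := by simp [del]
    have hS : (⋃ i, ({x i, y i} : Set α)) = {x 0, x 1, x 2, y 0, y 1, y 2} := by
      ext z
      simp only [Set.mem_iUnion, Set.mem_insert_iff, Set.mem_singleton_iff]
      constructor
      · rintro ⟨i, h | h⟩ <;> fin_cases i <;> tauto
      · rintro (h | h | h | h | h | h)
        exacts [⟨0, Or.inl h⟩, ⟨1, Or.inl h⟩, ⟨2, Or.inl h⟩,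
          ⟨0, Or.inr h⟩, ⟨1, Or.inr h⟩, ⟨2, Or.inr h⟩]
    have hxne : ∀ i j : Fin 3, i ≠ j → x i ≠ x j := fun i j hij h => hij (hxinj h)
    have hyne : ∀ i j : Fin 3, i ≠ j → y i ≠ y j := fun i j hij h => hij (hyinj h)
    have hyx : ∀ i j, y i ≠ x j := fun i j h => hxy j i h.symm
    have h7 : (M.E \ {e}).encard = 7 := by
      rw [← hgnd, hE, hS]
      rw [Set.encard_insert_of_notMem (by
          simp [(htx 0), (htx 1), (htx 2), (hty 0), (hty 1), (hty 2)]),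
        Set.encard_insert_of_notMem (by
          simp [hxne 0 1 (by decide), hxne 0 2 (by decide), hxy 0 0, hxy 0 1, hxy 0 2]),
        Set.encard_insert_of_notMem (by
          simp [hxne 1 2 (by decide), hxy 1 0, hxy 1 1, hxy 1 2]),
        Set.encard_insert_of_notMem (by
          simp [hxy 2 0, hxy 2 1, hxy 2 2]),
        Set.encard_insert_of_notMem (by
          simp [hyne 0 1 (by decide), hyne 0 2 (by decide)]),
        Set.encard_insert_of_notMem (by
          simp [hyne 1 2 (by decide)]),
        Set.encard_singleton]
      rfl
    have hME : M.E = insert e (M.E \ {e}) := by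
      rw [Set.insert_diff_singleton, Set.insert_eq_of_mem he]
    rw [hME, Set.encard_insert_of_notMem (fun h => h.2 rfl), h7]
    rfl
  have hfin : M.E.Finite := Set.finite_of_encard_eq_coe (k := 8) (by rw [hEcard]; rfl)
  have hn8 : M.E.ncard = 8 := by rw [Set.ncard_def, hEcard]; rfl
  refine ⟨hn8, ?_⟩
  rintro X ⟨hXE, hX4, ⟨I, hIX, hI2⟩, hpairs⟩
  have hXfin : X.Finite := hfin.subset hXE
  obtain ⟨e, he, heX⟩ : ∃ e ∈ M.E, e ∉ X := by
    by_contra h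
    push_neg at h
    have hEX : M.E = X := Set.Subset.antisymm (fun z hz => h z hz) hXE
    rw [hEX, hX4] at hn8
    omega
  obtain ⟨t, x, y, hr3, ⟨hxinj, hyinj, hxy, htx, hty⟩, hE, hrank, hlegs, hJr⟩ :=
    hdelspike e he
  set N := del M {e} with hN
  have hNdef : N = M ↾ (M.E \ {e}) := rfl
  have hgnd : N.E = M.E \ {e} := by rw [hNdef]; simp
  have hXN : X ⊆ N.E := by
    rw [hgnd]
    exact fun z hz => ⟨hXE hz, fun h => heX (mem_singleton_iff.1 h ▸ hz)⟩
  have hNsimp : ∀ S ⊆ N.E, S.encard ≤ 2 → N.Indep S := by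
    intro S hS hc
    rw [hNdef, restrict_indep_iff]
    rw [hgnd] at hS
    exact ⟨hsimp S (hS.trans diff_subset) hc, hS⟩
  have hIN : N.IsBasis I X := by
    rw [hNdef]
    exact hIX.isBasis_restrict_of_subset (by rw [← hgnd]; exact hXN)
  have hIfin : I.Finite := hXfin.subset hIX.subset
  have hIenc : I.encard = 2 := by rw [← hIfin.cast_ncard_eq, hI2]; rfl
  have hdep3 : ∀ S ⊆ X, S.encard = 3 → N.Dep S := by
    intro S hSX h3enc
    rw [dep_iff]
    refine ⟨fun hind => ?_, hSX.trans hXN⟩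
    have hle := encard_le_of_indep_subset_closure hind hIN.indep
      (hSX.trans hIN.subset_closure)
    rw [h3enc, hIenc] at hle
    exact absurd hle (by decide)
  have hmem : ∀ z ∈ X, z ≠ t → ∃ i : Fin 3, z = x i ∨ z = y i := by
    intro z hz hzt
    have hzE := hXN hz
    rw [hE] at hzE
    rcases hzE with h | h
    · exact absurd h hzt
    · simpa using h
  let f : α → Fin 3 := fun z => if h : ∃ i : Fin 3, z = x i ∨ z = y i then h.choose else 0
  have hf : ∀ z, (∃ i : Fin 3, z = x i ∨ z = y i) → z = x (f z) ∨ z = y (f z) := by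
    intro z h
    simp only [f, dif_pos h]
    exact h.choose_spec
  -- Lemma A : no circuit {t,a,b} meeting two distinct legs
  have hleg : ∀ (k : Fin 3) (c : α), (c = x k ∨ c = y k) →
      ({x k, y k} : Set α) ⊆ N.closure {t, c} := by
    intro k c hc
    have hCE : ({t, x k, y k} : Set α) ⊆ N.E := (hlegs k).1.subset_ground
    have htcE : ({t, c} : Set α) ⊆ N.E := by
      intro z hz
      rcases hz with rfl | hz
      · exact hCE (mem_insert _ _)
      · rw [mem_singleton_iff] at hz
        subst hz
        rcases hc with rfl | rfl
        · exact hCE (by simp)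
        · exact hCE (by simp)
    rcases hc with rfl | rfl
    · intro z hz
      rcases hz with rfl | hz
      · exact N.subset_closure _ htcE (by simp)
      · rw [mem_singleton_iff] at hz
        subst hz
        have h1 := (hlegs k).mem_closure_diff (show y k ∈ ({t, x k, y k} : Set α) by simp)
        exact N.closure_subset_closure (triple_diff_subset3 t (x k) (y k)) h1
    · intro z hz
      rcases hz with rfl | hz
      · have h1 := (hlegs k).mem_closure_diff (show x k ∈ ({t, x k, y k} : Set α) by simp)
        exact N.closure_subset_closure (triple_diff_subset2 t (x k) (y k)) h1
      · rw [mem_singleton_iff] at hz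
        subst hz
        exact N.subset_closure _ htcE (by simp)
  have legA : ∀ (a b : α) (i j : Fin 3), i ≠ j → (a = x i ∨ a = y i) → (b = x j ∨ b = y j) →
      N.Indep {a, b} → t ∈ N.closure {a, b} → False := by
    intro a b i j hij ha hb hab htcl
    have habE : ({a, b} : Set α) ⊆ N.E := hab.subset_ground
    have hta : ({t, a} : Set α) ⊆ N.closure {a, b} := by
      intro z hz
      rcases hz with rfl | hz
      · exact htcl
      · rw [mem_singleton_iff] at hz
        subst hz
        exact N.subset_closure _ habE (by simp)
    have htb : ({t, b} : Set α) ⊆ N.closure {a, b} := by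
      intro z hz
      rcases hz with rfl | hz
      · exact htcl
      · rw [mem_singleton_iff] at hz
        subst hz
        exact N.subset_closure _ habE (by simp)
    have hi : ({x i, y i} : Set α) ⊆ N.closure {a, b} :=
      (hleg i a ha).trans (closure_subset_closure_of_subset_closure hta)
    have hj : ({x j, y j} : Set α) ⊆ N.closure {a, b} :=
      (hleg j b hb).trans (closure_subset_closure_of_subset_closure htb)
    obtain ⟨k3, hk3i, hk3j⟩ := (show ∀ i j : Fin 3, ∃ k, k ≠ i ∧ k ≠ j by decide) i j
    have hJne : ({i, j} : Set (Fin 3)).Nonempty := ⟨i, by simp⟩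
    have hJnu : ({i, j} : Set (Fin 3)) ≠ Set.univ := by
      intro h
      have hk : k3 ∈ ({i, j} : Set (Fin 3)) := h ▸ mem_univ k3
      rcases hk with hk | hk
      · exact hk3i hk
      · exact hk3j (mem_singleton_iff.1 hk)
    obtain ⟨I3, hI3, hI3c⟩ := hJr {i, j} hJne hJnu
    have hUsub : (⋃ k ∈ ({i, j} : Set (Fin 3)), ({x k, y k} : Set α)) ⊆ N.closure {a, b} := by
      intro z hz
      simp only [mem_iUnion, exists_prop, mem_insert_iff, mem_singleton_iff] at hz
      obtain ⟨k, hk, hzk⟩ := hz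
      rcases hk with rfl | rfl
      · exact hi (by rcases hzk with rfl | rfl <;> simp)
      · exact hj (by rcases hzk with rfl | rfl <;> simp)
    have hI3cl : I3 ⊆ N.closure {a, b} := hI3.subset.trans hUsub
    have hI3fin : I3.Finite := by
      refine Set.Finite.subset ?_ hI3.subset
      exact (((Set.finite_singleton j).insert i).biUnion
        (fun k _ => (Set.finite_singleton (y k)).insert (x k)))
    have hI3enc : I3.encard = 3 := by
      rw [← hI3fin.cast_ncard_eq, hI3c, Set.ncard_pair hij]
      rfl
    have hle := encard_le_of_indep_subset_closure hI3.indep hab hI3cl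
    rw [hI3enc] at hle
    have h2 : ({a, b} : Set α).encard ≤ 2 :=
      (Set.encard_insert_le _ _).trans (by rw [Set.encard_singleton]; decide)
    exact absurd (hle.trans h2) (by decide)
  by_cases htX : t ∈ X
  · -- tip is on the line
    have hX'card : (X \ {t}).ncard = 3 := by
      rw [Set.ncard_diff_singleton_of_mem htX, hX4]
    have hpairleg : ∀ a ∈ X \ {t}, ∀ b ∈ X \ {t}, a ≠ b → f a = f b := by
      intro a ha b hb hab
      have hma := hmem a ha.1 (fun h => ha.2 (mem_singleton_iff.2 h))
      have hmb := hmem b hb.1 (fun h => hb.2 (mem_singleton_iff.2 h))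
      by_contra hfne
      have habX : ({a, b} : Set α) ⊆ X := by
        intro z hz
        rcases hz with rfl | hz
        · exact ha.1
        · rw [mem_singleton_iff] at hz; subst hz; exact hb.1
      have habI : N.Indep {a, b} := hNsimp _ (habX.trans hXN)
        ((Set.encard_insert_le _ _).trans (by rw [Set.encard_singleton]; decide))
      have hta : t ≠ a := fun h => ha.2 (mem_singleton_iff.2 h.symm)
      have htb : t ≠ b := fun h => hb.2 (mem_singleton_iff.2 h.symm)
      have h3enc : ({t, a, b} : Set α).encard = 3 := by
        rw [Set.encard_insert_of_notMem (by simp [hta, htb]), Set.encard_pair hab]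
        rfl
      have htabX : ({t, a, b} : Set α) ⊆ X := insert_subset htX habX
      have hdep := hdep3 _ htabX h3enc
      have htc : t ∈ N.closure {a, b} := by
        rw [habI.mem_closure_iff]
        exact Or.inl hdep
      exact legA a b (f a) (f b) hfne (hf a hma) (hf b hmb) habI htc
    obtain ⟨a, ha⟩ : (X \ {t}).Nonempty := Set.nonempty_of_ncard_ne_zero (by omega)
    have hma := hmem a ha.1 (fun h => ha.2 (mem_singleton_iff.2 h))
    have hsub : X \ {t} ⊆ {x (f a), y (f a)} := by
      intro z hz
      by_cases hza : z = a
      · subst hza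
        rcases hf z hma with h | h
        · exact mem_insert_iff.2 (Or.inl h)
        · exact mem_insert_iff.2 (Or.inr (mem_singleton_iff.2 h))
      · have hmz := hmem z hz.1 (fun h => hz.2 (mem_singleton_iff.2 h))
        have hfe := hpairleg z hz a ha hza
        rcases hf z hmz with h | h
        · rw [hfe] at h; exact mem_insert_iff.2 (Or.inl h)
        · rw [hfe] at h; exact mem_insert_iff.2 (Or.inr (mem_singleton_iff.2 h))
    have hle := Set.ncard_le_ncard hsub ((Set.finite_singleton _).insert _)
    have h2 : ({x (f a), y (f a)} : Set α).ncard ≤ 2 :=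
      (Set.ncard_insert_le _ _).trans (by rw [Set.ncard_singleton])
    rw [hX'card] at hle
    omega
  · -- tip is off the line : pigeonhole
    have hmapsto : ∀ z ∈ hXfin.toFinset, f z ∈ (Finset.univ : Finset (Fin 3)) :=
      fun _ _ => Finset.mem_univ _
    have hcardlt : (Finset.univ : Finset (Fin 3)).card < hXfin.toFinset.card := by
      rw [Finset.card_univ, Fintype.card_fin, ← Set.ncard_eq_toFinset_card X hXfin, hX4]
      omega
    obtain ⟨a, haF, b, hbF, hab, hfab⟩ :=
      Finset.exists_ne_map_eq_of_card_lt_of_maps_to hcardlt hmapsto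
    have haX : a ∈ X := hXfin.mem_toFinset.1 haF
    have hbX : b ∈ X := hXfin.mem_toFinset.1 hbF
    have hma := hmem a haX (fun h => htX (h ▸ haX))
    have hmb := hmem b hbX (fun h => htX (h ▸ hbX))
    have ha' := hf a hma
    have hb' := hf b hmb
    rw [← hfab] at hb'
    have habxy : ({x (f a), y (f a)} : Set α) ⊆ {a, b} := by
      rcases ha' with h1 | h1 <;> rcases hb' with h2 | h2
      · exact absurd (h1.symm ▸ h2.symm ▸ rfl : a = b) hab
      · intro z hz
        rcases hz with rfl | hz
        · rw [← h1]; exact mem_insert _ _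
        · rw [mem_singleton_iff] at hz; subst hz; rw [← h2]; simp
      · intro z hz
        rcases hz with rfl | hz
        · rw [← h2]; simp
        · rw [mem_singleton_iff] at hz; subst hz; rw [← h1]; exact mem_insert _ _
      · exact absurd (h1.symm ▸ h2.symm ▸ rfl : a = b) hab
    obtain ⟨c, hcX, hcab⟩ : ∃ c ∈ X, c ∉ ({a, b} : Set α) := by
      by_contra h
      push_neg at h
      have hle := Set.ncard_le_ncard (fun z hz => h z hz) ((Set.finite_singleton b).insert a)
      have h2 : ({a, b} : Set α).ncard ≤ 2 :=
        (Set.ncard_insert_le _ _).trans (by rw [Set.ncard_singleton])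
      rw [hX4] at hle
      omega
    have hmc := hmem c hcX (fun h => htX (h ▸ hcX))
    have hc' := hf c hmc
    have hij : f a ≠ f c := by
      intro h
      apply hcab
      apply habxy
      rcases hc' with h1 | h1
      · rw [h1, ← h]; exact mem_insert _ _
      · rw [h1, ← h]; simp
    have hacne : a ≠ c := fun h => hcab (h ▸ mem_insert _ _)
    have hacX : ({a, c} : Set α) ⊆ X := by
      intro z hz
      rcases hz with rfl | hz
      · exact haX
      · rw [mem_singleton_iff] at hz; subst hz; exact hcX
    have hacI : N.Indep {a, c} := hNsimp _ (hacX.trans hXN)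
      ((Set.encard_insert_le _ _).trans (by rw [Set.encard_singleton]; decide))
    have hXcl : X ⊆ N.closure {a, c} := by
      intro z hz
      by_cases hzac : z ∈ ({a, c} : Set α)
      · exact N.subset_closure _ hacI.subset_ground hzac
      · have hzne : z ∉ ({a, c} : Set α) := hzac
        have h3enc : (insert z {a, c} : Set α).encard = 3 := by
          rw [Set.encard_insert_of_notMem hzne, Set.encard_pair hacne]
          rfl
        have hdep := hdep3 _ (insert_subset hz hacX) h3enc
        rw [hacI.mem_closure_iff]
        exact Or.inl hdep
    have htab : t ∈ N.closure {a, b} := by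
      have h1 := (hlegs (f a)).mem_closure_diff
        (show t ∈ ({t, x (f a), y (f a)} : Set α) by simp)
      exact N.closure_subset_closure
        ((triple_diff_subset1 t (x (f a)) (y (f a))).trans habxy) h1
    have htac : t ∈ N.closure {a, c} := by
      have hsub2 : ({a, b} : Set α) ⊆ N.closure {a, c} := by
        intro w hw
        rcases hw with rfl | hw
        · exact hXcl haX
        · rw [mem_singleton_iff] at hw; subst hw; exact hXcl hbX
      exact closure_subset_closure_of_subset_closure hsub2 htab
    exact legA a c (f a) (f c) hij ha' hc' hacI htac

end SpikePaper
end
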